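/- Let N ∈ ℕ, m ∈ ℕ with m ≤ N, let 1 ≤ p, q ≤ ∞, let w = (w_i)_{i=1}^N be a vector of positive weights, and let p*, q* be the Hölder conjugates of p and q (1/p + 1/p* = 1 and 1/q + 1/q* = 1). Then the Kolmogorov m-width of the unweighted unit ball B^p_N in the weighted space ℓ^q_N(w) equals the Gelfand m-width of the weighted ball B^{q*}_N(1/w) in the unweighted space ℓ^{p*}_N, i.e. d_m(B^p_N, ℓ^q_N(w)) = d^m(B^{q*}_N(1/w), ℓ^{p*}_N), where 1/w = (1/w_i)_{i=1}^N. -/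

import Mathlib

open Finset
open scoped ENNReal

noncomputable section

/-- The weighted `ℓ^p` (quasi-)norm on `ℝ^N` with positive weights `w` and exponent
`p ∈ (0,∞]`: `‖x‖_{p,w} = (∑ i, (|x i| / w i)^p)^(1/p)` for `p < ∞`, and
`sup_i |x i| / w i` for `p = ∞`. -/
def wnorm {N : ℕ} (p : ℝ≥0∞) (w : Fin N → ℝ) (x : Fin N → ℝ) : ℝ :=
  if p = ⊤ then ⨆ i, |x i| / w i
  else (∑ i, (|x i| / w i) ^ p.toReal) ^ (1 / p.toReal)

/-- The weighted `ℓ^p` unit ball `B^p_N(w)` in `ℝ^N`. -/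
def wball {N : ℕ} (p : ℝ≥0∞) (w : Fin N → ℝ) : Set (Fin N → ℝ) :=
  {x | wnorm p w x ≤ 1}

/-- The Kolmogorov `m`-width of a subset `K` of `ℝ^N` equipped with the norm `nrm`. -/
def kolWidth {N : ℕ} (m : ℕ) (K : Set (Fin N → ℝ)) (nrm : (Fin N → ℝ) → ℝ) : ℝ :=
  sInf { r | ∃ X : Submodule ℝ (Fin N → ℝ), Module.finrank ℝ X ≤ m ∧
    r = ⨆ x : K, ⨅ z : X, nrm ((x : Fin N → ℝ) - (z : Fin N → ℝ)) }

/-- The Gelfand `m`-width of a subset `K` of `ℝ^N` equipped with the norm `nrm`: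
the infimum over linear maps `A : ℝ^N → ℝ^m` of `sup { nrm x : x ∈ K ∩ ker A }`
(equivalently, the infimum over subspaces of codimension at most `m`). -/
def gelWidth {N : ℕ} (m : ℕ) (K : Set (Fin N → ℝ)) (nrm : (Fin N → ℝ) → ℝ) : ℝ :=
  sInf { r | ∃ A : (Fin N → ℝ) →ₗ[ℝ] (Fin m → ℝ),
    r = ⨆ x : (K ∩ (LinearMap.ker A : Set (Fin N → ℝ)) : Set (Fin N → ℝ)),
          nrm (x : Fin N → ℝ) }

variable {N : ℕ}

/-- The standard pairing. -/
def pr (x y : Fin N → ℝ) : ℝ := ∑ i, x i * y i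

lemma wnorm_nonneg (r : ℝ≥0∞) (v : Fin N → ℝ) (hv : ∀ i, 0 < v i) (x : Fin N → ℝ) :
    0 ≤ wnorm r v x := by
  unfold wnorm
  split
  · exact Real.iSup_nonneg fun i => div_nonneg (abs_nonneg _) (hv i).le
  · exact Real.rpow_nonneg (Finset.sum_nonneg fun i _ =>
      Real.rpow_nonneg (div_nonneg (abs_nonneg _) (hv i).le) _) _

lemma wnorm_zero (r : ℝ≥0∞) (hr : 1 ≤ r) (v : Fin N → ℝ) (hv : ∀ i, 0 < v i) :
    wnorm r v (0 : Fin N → ℝ) = 0 := by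
  unfold wnorm
  split
  · simp only [Pi.zero_apply, abs_zero, zero_div]
    rcases isEmpty_or_nonempty (Fin N) with h | h
    · exact Real.iSup_of_isEmpty _
    · exact ciSup_const
  · rename_i h
    have ht : 0 < r.toReal := ENNReal.toReal_pos (by intro h0; simp [h0] at hr) h
    simp only [Pi.zero_apply, abs_zero, zero_div, Real.zero_rpow ht.ne', Finset.sum_const, smul_zero, one_div]
    exact Real.zero_rpow (by positivity)

lemma toReal_pos_of_one_le {r : ℝ≥0∞} (hr : 1 ≤ r) (h : r ≠ ⊤) : 0 < r.toReal :=
  ENNReal.toReal_pos (by intro h0; simp [h0] at hr) h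

lemma one_le_toReal_of {r : ℝ≥0∞} (hr : 1 ≤ r) (h : r ≠ ⊤) : 1 ≤ r.toReal := by
  rw [← ENNReal.toReal_one]
  exact ENNReal.toReal_mono h hr

lemma coord_le (r : ℝ≥0∞) (hr : 1 ≤ r) (v : Fin N → ℝ) (hv : ∀ i, 0 < v i)
    (x : Fin N → ℝ) (i : Fin N) : |x i| / v i ≤ wnorm r v x := by
  unfold wnorm
  split
  · exact le_ciSup (f := fun j => |x j| / v j) (Set.Finite.bddAbove (Set.finite_range _)) i
  · rename_i h
    have ht : 0 < r.toReal := toReal_pos_of_one_le hr h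
    have ha : 0 ≤ |x i| / v i := div_nonneg (abs_nonneg _) (hv i).le
    have : |x i| / v i = ((|x i| / v i) ^ r.toReal) ^ (1 / r.toReal) := by
      rw [← Real.rpow_mul ha, mul_one_div_cancel ht.ne', Real.rpow_one]
    rw [this]
    refine Real.rpow_le_rpow (Real.rpow_nonneg ha _) ?_ (by positivity)
    exact Finset.single_le_sum (f := fun j => (|x j| / v j) ^ r.toReal)
      (fun j _ => Real.rpow_nonneg (div_nonneg (abs_nonneg _) (hv j).le) _) (Finset.mem_univ i)

lemma wnorm_le_sum (r : ℝ≥0∞) (hr : 1 ≤ r) (v : Fin N → ℝ) (hv : ∀ i, 0 < v i)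
    (x : Fin N → ℝ) : wnorm r v x ≤ ∑ i, |x i| / v i := by
  have hS : 0 ≤ ∑ i, |x i| / v i :=
    Finset.sum_nonneg fun i _ => div_nonneg (abs_nonneg _) (hv i).le
  unfold wnorm
  split
  · exact Real.iSup_le (fun i => Finset.single_le_sum
      (f := fun j => |x j| / v j) (fun j _ => div_nonneg (abs_nonneg _) (hv j).le)
      (Finset.mem_univ i)) hS
  · rename_i h
    have ht : 1 ≤ r.toReal := one_le_toReal_of hr h
    have ht0 : 0 < r.toReal := lt_of_lt_of_le one_pos ht
    set t := r.toReal
    set S := ∑ i, |x i| / v i with hSdef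
    have key : ∑ i, (|x i| / v i) ^ t ≤ S ^ t := by
      have step : ∀ i : Fin N, (|x i| / v i) ^ t ≤ (|x i| / v i) * S ^ (t - 1) := by
        intro i
        have ha : 0 ≤ |x i| / v i := div_nonneg (abs_nonneg _) (hv i).le
        have h1 : (|x i| / v i) ^ t = (|x i| / v i) * (|x i| / v i) ^ (t - 1) := by
          have h2 := Real.rpow_add_of_nonneg ha zero_le_one (by linarith : (0:ℝ) ≤ t - 1)
          rw [Real.rpow_one] at h2
          rw [show (1:ℝ) + (t - 1) = t by ring] at h2
          exact h2
        rw [h1]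
        refine mul_le_mul_of_nonneg_left (Real.rpow_le_rpow ha ?_ (by linarith)) ha
        exact Finset.single_le_sum (f := fun j => |x j| / v j)
          (fun j _ => div_nonneg (abs_nonneg _) (hv j).le) (Finset.mem_univ i)
      calc ∑ i, (|x i| / v i) ^ t ≤ ∑ i, (|x i| / v i) * S ^ (t - 1) :=
            Finset.sum_le_sum fun i _ => step i
        _ = S * S ^ (t - 1) := by rw [← Finset.sum_mul]
        _ = S ^ t := by
            have h2 := Real.rpow_add_of_nonneg hS zero_le_one (by linarith : (0:ℝ) ≤ t - 1)
            rw [Real.rpow_one] at h2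
            rw [show (1:ℝ) + (t - 1) = t by ring] at h2
            rw [h2]
    calc (∑ i, (|x i| / v i) ^ t) ^ (1 / t) ≤ (S ^ t) ^ (1 / t) :=
          Real.rpow_le_rpow (Finset.sum_nonneg fun i _ =>
            Real.rpow_nonneg (div_nonneg (abs_nonneg _) (hv i).le) _) key (by positivity)
      _ = S := by rw [← Real.rpow_mul hS, mul_one_div_cancel ht0.ne', Real.rpow_one]

/-- Trichotomy for a pair of ENNReal Hölder conjugates. -/
def ConjTriple (r s : ℝ≥0∞) : Prop :=
  (r = 1 ∧ s = ⊤) ∨ (r = ⊤ ∧ s = 1) ∨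
    (r ≠ ⊤ ∧ s ≠ ⊤ ∧ Real.HolderConjugate r.toReal s.toReal)

lemma conjTriple_of {r s : ℝ≥0∞} (hr : 1 ≤ r) (h : 1/r + 1/s = 1) : ConjTriple r s := by
  rcases eq_or_lt_of_le hr with h1 | h1
  · left
    refine ⟨h1.symm, ?_⟩
    rw [← h1] at h
    simp only [one_div, inv_one] at h
    have h0 : (1:ℝ≥0∞) + s⁻¹ = 1 + 0 := by rw [add_zero]; exact h
    have : s⁻¹ = 0 := (ENNReal.add_right_inj (by simp)).1 h0
    rwa [ENNReal.inv_eq_zero] at this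
  · rcases eq_or_ne r ⊤ with hrt | hrt
    · right; left
      refine ⟨hrt, ?_⟩
      rw [hrt] at h
      simp only [one_div, ENNReal.inv_top, zero_add] at h
      rwa [ENNReal.inv_eq_one] at h
    · right; right
      have hrne0 : r ≠ 0 := (lt_of_lt_of_le zero_lt_one hr).ne'
      have hst : s ≠ ⊤ := by
        intro hst
        rw [hst] at h
        simp only [one_div, ENNReal.inv_top, add_zero, ENNReal.inv_eq_one] at h
        exact h1.ne' h
      have hsne0 : s ≠ 0 := by
        intro hs0
        rw [hs0] at h
        simp only [one_div, ENNReal.inv_zero] at h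
        exact (by simp : (1:ℝ≥0∞) ≠ ⊤) (by
          rw [← h]; exact ENNReal.add_eq_top.2 (Or.inr rfl))
      refine ⟨hrt, hst, Real.holderConjugate_iff.2 ⟨?_, ?_⟩⟩
      · rw [← ENNReal.toReal_one]
        exact (ENNReal.toReal_lt_toReal (by simp) hrt).2 h1
      · have h' := congrArg ENNReal.toReal h
        rw [ENNReal.toReal_add (by simp [one_div, hrne0])
          (by simp [one_div, hsne0])] at h'
        simpa [one_div, ENNReal.toReal_inv] using h'

lemma ConjTriple.one_le_left {r s : ℝ≥0∞} (h : ConjTriple r s) : 1 ≤ r := by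
  rcases h with ⟨h1, _⟩ | ⟨h1, _⟩ | ⟨hrt, _, h3⟩
  · exact h1.ge
  · exact h1 ▸ le_top
  · have h' : (1:ℝ≥0∞).toReal < r.toReal := by
      rw [ENNReal.toReal_one]; exact h3.lt
    exact ((ENNReal.toReal_lt_toReal (by simp) hrt).1 h').le

lemma ConjTriple.symm' {r s : ℝ≥0∞} (h : ConjTriple r s) : ConjTriple s r := by
  rcases h with ⟨h1, h2⟩ | ⟨h1, h2⟩ | ⟨hrt, hst, h3⟩
  · exact Or.inr (Or.inl ⟨h2, h1⟩)
  · exact Or.inl ⟨h2, h1⟩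
  · exact Or.inr (Or.inr ⟨hst, hrt, h3.symm⟩)

lemma ConjTriple.one_le_right {r s : ℝ≥0∞} (h : ConjTriple r s) : 1 ≤ s :=
  h.symm'.one_le_left

lemma wnorm_one_top (x : Fin N → ℝ) : wnorm ⊤ (fun _ => 1) x = ⨆ i, |x i| := by
  simp [wnorm]

lemma wnorm_one_one (x : Fin N → ℝ) : wnorm 1 (fun _ => 1) x = ∑ i, |x i| := by
  simp [wnorm, ENNReal.toReal_one]

lemma wnorm_one_finite {r : ℝ≥0∞} (hrt : r ≠ ⊤) (x : Fin N → ℝ) :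
    wnorm r (fun _ => 1) x = (∑ i, |x i| ^ r.toReal) ^ (1 / r.toReal) := by
  simp [wnorm, hrt]

/-- Hölder's inequality for the pairing. -/
lemma pair_le {r s : ℝ≥0∞} (h : ConjTriple r s) (x y : Fin N → ℝ) :
    pr x y ≤ wnorm r (fun _ => 1) x * wnorm s (fun _ => 1) y := by
  have habs : pr x y ≤ ∑ i, |x i| * |y i| := by
    refine Finset.sum_le_sum fun i _ => ?_
    rw [← abs_mul]; exact le_abs_self _
  rcases h with ⟨h1, h2⟩ | ⟨h1, h2⟩ | ⟨hrt, hst, h3⟩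
  · subst h1; subst h2
    rw [wnorm_one_one, wnorm_one_top]
    refine habs.trans ?_
    have h0 : (0:ℝ) ≤ ⨆ i, |y i| := Real.iSup_nonneg fun i => abs_nonneg _
    calc ∑ i, |x i| * |y i| ≤ ∑ i, |x i| * (⨆ j, |y j|) := by
          refine Finset.sum_le_sum fun i _ => mul_le_mul_of_nonneg_left ?_ (abs_nonneg _)
          exact le_ciSup (f := fun j => |y j|) (Set.Finite.bddAbove (Set.finite_range _)) i
      _ = (∑ i, |x i|) * ⨆ j, |y j| := by rw [← Finset.sum_mul]
  · subst h1; subst h2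
    rw [wnorm_one_one, wnorm_one_top]
    refine habs.trans ?_
    calc ∑ i, |x i| * |y i| ≤ ∑ i, (⨆ j, |x j|) * |y i| := by
          refine Finset.sum_le_sum fun i _ => mul_le_mul_of_nonneg_right ?_ (abs_nonneg _)
          exact le_ciSup (f := fun j => |x j|) (Set.Finite.bddAbove (Set.finite_range _)) i
      _ = (⨆ j, |x j|) * ∑ i, |y i| := by rw [← Finset.mul_sum]
  · rw [wnorm_one_finite hrt, wnorm_one_finite hst]
    exact (Real.inner_le_Lp_mul_Lq Finset.univ x y h3)

/-- Sharpness of Hölder: the dual norm is attained on the primal unit ball. -/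
lemma pair_sharp {r s : ℝ≥0∞} (h : ConjTriple r s) (y : Fin N → ℝ) :
    ∃ x : Fin N → ℝ, wnorm r (fun _ => 1) x ≤ 1 ∧ pr x y = wnorm s (fun _ => 1) y := by
  rcases h with ⟨h1, h2⟩ | ⟨h1, h2⟩ | ⟨hrt, hst, h3⟩
  · -- r = 1, s = ⊤ : pick a maximizing coordinate
    subst h1; subst h2
    rcases isEmpty_or_nonempty (Fin N) with hN | hN
    · refine ⟨0, ?_, ?_⟩
      · rw [wnorm_one_one]; simp
      · rw [wnorm_one_top]; simp [pr]
    · obtain ⟨i₀, hi₀⟩ := Finite.exists_max (fun i => |y i|)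
      refine ⟨fun j => if j = i₀ then (if 0 ≤ y i₀ then 1 else -1) else 0, ?_, ?_⟩
      · rw [wnorm_one_one]
        have : ∀ j, |if j = i₀ then (if 0 ≤ y i₀ then (1:ℝ) else -1) else 0|
            = if j = i₀ then 1 else 0 := by
          intro j; split
          · split <;> simp
          · simp
        simp only [this, Finset.sum_ite_eq' Finset.univ i₀ (fun _ => (1:ℝ)),
          Finset.mem_univ, if_true]
        exact le_refl 1
      · rw [wnorm_one_top]
        have hsup : (⨆ i, |y i|) = |y i₀| :=
          le_antisymm (Real.iSup_le hi₀ (abs_nonneg _))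
            (le_ciSup (f := fun j => |y j|) (Set.Finite.bddAbove (Set.finite_range _)) i₀)
        rw [hsup]
        unfold pr
        rw [Finset.sum_eq_single i₀ (fun j _ hj => by simp [hj]) (by simp)]
        by_cases hyi : 0 ≤ y i₀
        · simp [hyi, abs_of_nonneg hyi]
        · rw [abs_of_neg (not_le.1 hyi)]; simp [hyi]
  · -- r = ⊤, s = 1 : sign vector
    subst h1; subst h2
    refine ⟨fun i => if 0 ≤ y i then 1 else -1, ?_, ?_⟩
    · rw [wnorm_one_top]
      refine Real.iSup_le (fun i => ?_) zero_le_one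
      split <;> simp
    · rw [wnorm_one_one]
      unfold pr
      refine Finset.sum_congr rfl fun i _ => ?_
      show (if 0 ≤ y i then (1:ℝ) else -1) * y i = |y i|
      by_cases hyi : 0 ≤ y i
      · rw [if_pos hyi, one_mul, abs_of_nonneg hyi]
      · rw [if_neg hyi, neg_one_mul, abs_of_neg (not_le.1 hyi)]
  · -- both finite
    set t := r.toReal
    set u := s.toReal
    have htu : (u - 1) * t = u := h3.symm.sub_one_mul_conj
    have ht1 : 1 < t := h3.lt
    have hu1 : 1 < u := h3.symm.lt
    have hr1 : (1:ℝ≥0∞) ≤ r := by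
      have h' : (1:ℝ≥0∞).toReal < r.toReal := by rw [ENNReal.toReal_one]; exact ht1
      exact ((ENNReal.toReal_lt_toReal (by simp) hrt).1 h').le
    have hs1 : (1:ℝ≥0∞) ≤ s := by
      have h' : (1:ℝ≥0∞).toReal < s.toReal := by rw [ENNReal.toReal_one]; exact hu1
      exact ((ENNReal.toReal_lt_toReal (by simp) hst).1 h').le
    rcases eq_or_ne y 0 with rfl | hy
    · refine ⟨0, ?_, ?_⟩
      · rw [wnorm_zero r hr1 _ (fun _ => one_pos)]; exact zero_le_one
      · rw [wnorm_zero s hs1 _ (fun _ => one_pos)]; simp [pr]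
    · have ht0 : (0:ℝ) < t := lt_trans one_pos ht1
      have hu0 : (0:ℝ) < u := lt_trans one_pos hu1
      set M : ℝ := (∑ i, |y i| ^ u) ^ (1 / u) with hMdef
      have hsum_pos : 0 < ∑ i, |y i| ^ u := by
        obtain ⟨i₀, hi₀⟩ : ∃ i, y i ≠ 0 := by
          by_contra hc
          push_neg at hc
          exact hy (funext hc)
        refine Finset.sum_pos' (fun i _ => Real.rpow_nonneg (abs_nonneg _) _) ?_
        exact ⟨i₀, Finset.mem_univ _, Real.rpow_pos_of_pos (abs_pos.2 hi₀) _⟩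
      have hM : 0 < M := Real.rpow_pos_of_pos hsum_pos _
      have hMu : M ^ u = ∑ i, |y i| ^ u := by
        rw [hMdef, ← Real.rpow_mul hsum_pos.le, one_div, inv_mul_cancel₀ hu0.ne',
          Real.rpow_one]
      set x : Fin N → ℝ := fun i => (if 0 ≤ y i then 1 else -1) * |y i| ^ (u - 1) / M ^ (u - 1)
        with hxdef
      have habs : ∀ i, |x i| = |y i| ^ (u - 1) / M ^ (u - 1) := by
        intro i
        rw [hxdef]
        rw [abs_div, abs_mul]
        have h1 : |if 0 ≤ y i then (1:ℝ) else -1| = 1 := by split <;> simp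
        rw [h1, one_mul, abs_of_nonneg (Real.rpow_nonneg (abs_nonneg _) _),
          abs_of_nonneg (Real.rpow_nonneg hM.le _)]
      refine ⟨x, ?_, ?_⟩
      · rw [wnorm_one_finite hrt]
        have hxt : ∀ i, |x i| ^ t = |y i| ^ u / M ^ u := by
          intro i
          rw [habs i, Real.div_rpow (Real.rpow_nonneg (abs_nonneg _) _)
            (Real.rpow_nonneg hM.le _)]
          rw [← Real.rpow_mul (abs_nonneg _), ← Real.rpow_mul hM.le, htu]
        show (∑ i, |x i| ^ t) ^ (1 / t) ≤ 1
        simp only [hxt]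
        rw [← Finset.sum_div, ← hMu, div_self (by positivity)]
        rw [Real.one_rpow]
      · rw [wnorm_one_finite hst]
        unfold pr
        have hterm : ∀ i, x i * y i = |y i| ^ u / M ^ (u - 1) := by
          intro i
          rw [hxdef]
          have hsy : (if 0 ≤ y i then (1:ℝ) else -1) * |y i| ^ (u - 1) / M ^ (u - 1) * y i
              = |y i| ^ (u - 1) * |y i| / M ^ (u - 1) := by
            split <;> rename_i hyi
            · rw [abs_of_nonneg hyi]; ring
            · rw [abs_of_neg (not_le.1 hyi)]; ring
          rw [hsy]
          congr 1
          have := Real.rpow_add_of_nonneg (abs_nonneg (y i)) (by linarith : (0:ℝ) ≤ u - 1)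
            zero_le_one
          rw [Real.rpow_one] at this
          rw [show u - 1 + 1 = u by ring] at this
          rw [← this]
        simp only [hterm]
        rw [← Finset.sum_div, ← hMu]
        rw [← Real.rpow_sub hM, show u - (u - 1) = 1 by ring, Real.rpow_one]
        have hfin : (M ^ u) ^ (1/u) = M := by
          rw [← Real.rpow_mul hM.le, mul_one_div_cancel hu0.ne', Real.rpow_one]
        exact hfin.symm

lemma wnorm_scale (r : ℝ≥0∞) (v : Fin N → ℝ) (hv : ∀ i, 0 < v i) (x : Fin N → ℝ) :
    wnorm r v x = wnorm r (fun _ => 1) (fun i => x i / v i) := by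
  have key : ∀ i, |x i / v i| / (1:ℝ) = |x i| / v i := by
    intro i
    rw [div_one, abs_div, abs_of_pos (hv i)]
  unfold wnorm
  split <;> simp only [key]

lemma wnorm_inv_scale (r : ℝ≥0∞) (v : Fin N → ℝ) (hv : ∀ i, 0 < v i) (y : Fin N → ℝ) :
    wnorm r (fun i => (v i)⁻¹) y = wnorm r (fun _ => 1) (fun i => y i * v i) := by
  have key : ∀ i, |y i * v i| / (1:ℝ) = |y i| / (v i)⁻¹ := by
    intro i
    rw [div_one, abs_mul, abs_of_pos (hv i), div_inv_eq_mul]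
  unfold wnorm
  split <;> simp only [key]

lemma pr_comm (x y : Fin N → ℝ) : pr x y = pr y x :=
  Finset.sum_congr rfl fun i _ => mul_comm _ _

lemma pr_scale (v : Fin N → ℝ) (hv : ∀ i, 0 < v i) (x y : Fin N → ℝ) :
    pr x y = pr (fun i => x i / v i) (fun i => y i * v i) := by
  refine Finset.sum_congr rfl fun i _ => ?_
  have hne : v i ≠ 0 := (hv i).ne'
  field_simp

/-- Weighted Hölder. -/
lemma pair_le_w {r s : ℝ≥0∞} (h : ConjTriple r s) (v : Fin N → ℝ) (hv : ∀ i, 0 < v i)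
    (x y : Fin N → ℝ) :
    pr x y ≤ wnorm r v x * wnorm s (fun i => (v i)⁻¹) y := by
  rw [pr_scale v hv, wnorm_scale r v hv, wnorm_inv_scale s v hv]
  exact pair_le h _ _

/-- Weighted sharpness. -/
lemma pair_sharp_w {r s : ℝ≥0∞} (h : ConjTriple r s) (v : Fin N → ℝ) (hv : ∀ i, 0 < v i)
    (y : Fin N → ℝ) :
    ∃ x : Fin N → ℝ, wnorm r v x ≤ 1 ∧ pr x y = wnorm s (fun i => (v i)⁻¹) y := by
  obtain ⟨a, ha1, ha2⟩ := pair_sharp h (fun i => y i * v i)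
  refine ⟨fun i => a i * v i, ?_, ?_⟩
  · rw [wnorm_scale r v hv]
    have : (fun i => (a i * v i) / v i) = a := funext fun i => by
      rw [mul_div_cancel_right₀ _ (hv i).ne']
    rw [this]; exact ha1
  · rw [wnorm_inv_scale s v hv, ← ha2]
    refine Finset.sum_congr rfl fun i _ => ?_
    ring

/-- The pairing with a fixed vector, as a linear map. -/
def pairL (z : Fin N → ℝ) : (Fin N → ℝ) →ₗ[ℝ] ℝ where
  toFun := fun y => pr z y
  map_add' := fun a b => by
    unfold pr
    rw [← Finset.sum_add_distrib]
    exact Finset.sum_congr rfl fun i _ => by simp [mul_add]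
  map_smul' := fun c y => by
    unfold pr
    simp only [Pi.smul_apply, smul_eq_mul, RingHom.id_apply, Finset.mul_sum]
    exact Finset.sum_congr rfl fun i _ => by ring

@[simp] lemma pairL_apply (z y : Fin N → ℝ) : pairL z y = pr z y := rfl

lemma pr_sub_left (x z y : Fin N → ℝ) : pr (x - z) y = pr x y - pr z y := by
  unfold pr
  rw [← Finset.sum_sub_distrib]
  exact Finset.sum_congr rfl fun i _ => by simp [sub_mul]

lemma span_basis_eq (X : Submodule ℝ (Fin N → ℝ))
    (b : Module.Basis (Fin (Module.finrank ℝ X)) ℝ X) :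
    Submodule.span ℝ (Set.range fun i => ((b i : X) : Fin N → ℝ)) = X := by
  have h1 : (Set.range fun i => ((b i : X) : Fin N → ℝ))
      = X.subtype '' (Set.range b) := by
    rw [← Set.range_comp]; rfl
  rw [h1, ← Submodule.map_span, b.span_eq, Submodule.map_subtype_top]

/-- Direction A: for every candidate subspace for the Kolmogorov width there is a
linear map realizing at most the same value for the Gelfand width. -/
lemma dirA {m : ℕ} {p q pSt qSt : ℝ≥0∞} (hpq : ConjTriple p pSt) (hqq : ConjTriple q qSt)
    (w : Fin N → ℝ) (hw : ∀ i, 0 < w i)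
    (X : Submodule ℝ (Fin N → ℝ)) (hX : Module.finrank ℝ X ≤ m) :
    ∃ A : (Fin N → ℝ) →ₗ[ℝ] (Fin m → ℝ),
      (⨆ lam : (wball qSt (fun i => (w i)⁻¹) ∩
          (LinearMap.ker A : Set (Fin N → ℝ)) : Set (Fin N → ℝ)),
        wnorm pSt (fun _ => 1) (lam : Fin N → ℝ))
      ≤ ⨆ x : (wball p (fun _ => 1) : Set (Fin N → ℝ)),
          ⨅ z : X, wnorm q w ((x : Fin N → ℝ) - (z : Fin N → ℝ)) := by
  classical
  set k := Module.finrank ℝ X with hk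
  let b : Module.Basis (Fin k) ℝ X := Module.finBasis ℝ X
  let zfam : Fin m → (Fin N → ℝ) := fun j => if h : (j : ℕ) < k then ((b ⟨j, h⟩ : X) : Fin N → ℝ) else 0
  refine ⟨LinearMap.pi (fun j => pairL (zfam j)), ?_⟩
  set A := LinearMap.pi (R := ℝ) (fun j : Fin m => pairL (zfam j)) with hA
  -- vectors in ker A annihilate X
  have hker : ∀ lam : Fin N → ℝ, A lam = 0 → ∀ z ∈ X, pr z lam = 0 := by
    intro lam hlam z hz
    have hb : ∀ i : Fin k, pr ((b i : X) : Fin N → ℝ) lam = 0 := by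
      intro i
      have hjlt : (i : ℕ) < k := i.2
      have hjm : (i : ℕ) < m := lt_of_lt_of_le hjlt hX
      have := congrFun hlam ⟨i, hjm⟩
      simp only [hA, LinearMap.pi_apply, pairL_apply, Pi.zero_apply] at this
      rw [← this]
      have hz2 : zfam ⟨i, hjm⟩ = ((b i : X) : Fin N → ℝ) := by
        simp only [zfam, dif_pos hjlt]
      rw [hz2]
    have hzspan : z ∈ Submodule.span ℝ (Set.range fun i => ((b i : X) : Fin N → ℝ)) := by
      rw [span_basis_eq X b]; exact hz
    have hle : Submodule.span ℝ (Set.range fun i => ((b i : X) : Fin N → ℝ))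
        ≤ LinearMap.ker (pairL lam) := by
      rw [Submodule.span_le]
      rintro _ ⟨i, rfl⟩
      simp only [SetLike.mem_coe, LinearMap.mem_ker, pairL_apply]
      rw [pr_comm]; exact hb i
    have := hle hzspan
    simp only [LinearMap.mem_ker, pairL_apply] at this
    rw [pr_comm]; exact this
  -- the sup on the Kolmogorov side is over a nonempty set and bounded
  have hzero_memK : (0 : Fin N → ℝ) ∈ wball p (fun _ => 1) := by
    show wnorm p (fun _ => 1) 0 ≤ 1
    rw [wnorm_zero p hpq.one_le_left _ (fun _ => one_pos)]; exact zero_le_one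
  haveI : Nonempty (wball p (fun _ => 1) : Set (Fin N → ℝ)) := ⟨⟨0, hzero_memK⟩⟩
  haveI : Nonempty X := ⟨0⟩
  have hbddB : ∀ x : Fin N → ℝ, BddBelow (Set.range fun z : X => wnorm q w (x - (z : Fin N → ℝ))) := by
    intro x
    exact ⟨0, by rintro _ ⟨z, rfl⟩; exact wnorm_nonneg q w hw _⟩
  have hC : ∀ x : Fin N → ℝ, x ∈ wball p (fun _ => 1) →
      (⨅ z : X, wnorm q w (x - (z : Fin N → ℝ))) ≤ ∑ i, (w i)⁻¹ := by
    intro x hx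
    refine le_trans (ciInf_le (hbddB x) (0 : X)) ?_
    have hx0 : x - ((0 : X) : Fin N → ℝ) = x := by simp
    rw [hx0]
    refine le_trans (wnorm_le_sum q hqq.one_le_left w hw x) ?_
    refine Finset.sum_le_sum fun i _ => ?_
    have h1 : |x i| ≤ 1 := by
      have := coord_le p hpq.one_le_left (fun _ => 1) (fun _ => one_pos) x i
      rw [div_one] at this
      exact this.trans hx
    rw [div_eq_mul_inv]
    calc |x i| * (w i)⁻¹ ≤ 1 * (w i)⁻¹ :=
          mul_le_mul_of_nonneg_right h1 (inv_nonneg.2 (hw i).le)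
      _ = (w i)⁻¹ := one_mul _
  have hbddA : BddAbove (Set.range fun x : (wball p (fun _ => 1) : Set (Fin N → ℝ)) =>
      ⨅ z : X, wnorm q w ((x : Fin N → ℝ) - (z : Fin N → ℝ))) := by
    refine ⟨∑ i, (w i)⁻¹, ?_⟩
    rintro _ ⟨⟨x, hx⟩, rfl⟩
    exact hC x hx
  -- main estimate
  refine Real.iSup_le ?_ ?_
  · rintro ⟨lam, hball, hkerA⟩
    obtain ⟨x₀, hx₀, hx₀eq⟩ := pair_sharp hpq lam
    have hann : ∀ z ∈ X, pr z lam = 0 := hker lam (by exact hkerA)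
    have step : ∀ z : X, wnorm pSt (fun _ => 1) lam ≤ wnorm q w (x₀ - (z : Fin N → ℝ)) := by
      rintro ⟨z, hz⟩
      have h1 : pr (x₀ - z) lam = pr x₀ lam := by
        rw [pr_sub_left, hann z hz, sub_zero]
      calc wnorm pSt (fun _ => 1) lam = pr (x₀ - z) lam := by rw [h1, hx₀eq]
        _ ≤ wnorm q w (x₀ - z) * wnorm qSt (fun i => (w i)⁻¹) lam := pair_le_w hqq w hw _ _
        _ ≤ wnorm q w (x₀ - z) * 1 := by
            refine mul_le_mul_of_nonneg_left ?_ (wnorm_nonneg q w hw _)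
            exact hball
        _ = wnorm q w (x₀ - z) := mul_one _
    have h1 : wnorm pSt (fun _ => 1) lam ≤ ⨅ z : X, wnorm q w (x₀ - (z : Fin N → ℝ)) :=
      le_ciInf step
    refine h1.trans ?_
    exact le_ciSup hbddA (⟨x₀, hx₀⟩ : (wball p (fun _ => 1) : Set (Fin N → ℝ)))
  · exact Real.iSup_nonneg fun x => Real.iInf_nonneg fun z => wnorm_nonneg q w hw _

lemma wnorm_eq_pilp (r : ℝ≥0∞) [Fact (1 ≤ r)] (v : Fin N → ℝ) (hv : ∀ i, 0 < v i)
    (x : Fin N → ℝ) :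
    wnorm r v x = ‖(WithLp.equiv r (Fin N → ℝ)).symm (fun i => x i / v i)‖ := by
  have hr : (1:ℝ≥0∞) ≤ r := Fact.out
  have key : ∀ i, ‖((WithLp.equiv r (Fin N → ℝ)).symm (fun i => x i / v i)) i‖
      = |x i| / v i := by
    intro i
    rw [WithLp.equiv_symm_apply, PiLp.toLp_apply, Real.norm_eq_abs, abs_div, abs_of_pos (hv i)]
  rcases eq_or_ne r ⊤ with rfl | hrt
  · rw [PiLp.norm_eq_ciSup]
    simp only [key]
    rw [wnorm]
    simp
  · rw [PiLp.norm_eq_sum (toReal_pos_of_one_le hr hrt)]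
    simp only [key]
    rw [wnorm, if_neg hrt]

def scaleL (v : Fin N → ℝ) : (Fin N → ℝ) →ₗ[ℝ] (Fin N → ℝ) where
  toFun := fun x i => x i / v i
  map_add' := fun a b => funext fun i => by
    show (a i + b i) / v i = a i / v i + b i / v i
    rw [add_div]
  map_smul' := fun c a => funext fun i => by
    show (c * a i) / v i = c * (a i / v i)
    rw [mul_div_assoc]

def stdb (N : ℕ) (i : Fin N) : Fin N → ℝ := fun j => if i = j then 1 else 0

lemma rep_linear (L : (Fin N → ℝ) →ₗ[ℝ] ℝ) (y : Fin N → ℝ) :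
    L y = pr y (fun i => L (stdb N i)) := by
  conv_lhs => rw [pi_eq_sum_univ y, map_sum]
  unfold pr
  refine Finset.sum_congr rfl fun i _ => ?_
  rw [map_smul, smul_eq_mul]
  rfl

/-- Direction B: for every candidate map for the Gelfand width there is a subspace
realizing at most the same value for the Kolmogorov width. -/
lemma dirB {m : ℕ} {p q pSt qSt : ℝ≥0∞} (hpq : ConjTriple p pSt) (hqq : ConjTriple q qSt)
    (w : Fin N → ℝ) (hw : ∀ i, 0 < w i) (A : (Fin N → ℝ) →ₗ[ℝ] (Fin m → ℝ)) :
    ∃ X : Submodule ℝ (Fin N → ℝ), Module.finrank ℝ X ≤ m ∧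
      (⨆ x : (wball p (fun _ => 1) : Set (Fin N → ℝ)),
          ⨅ z : X, wnorm q w ((x : Fin N → ℝ) - (z : Fin N → ℝ)))
      ≤ ⨆ lam : (wball qSt (fun i => (w i)⁻¹) ∩
          (LinearMap.ker A : Set (Fin N → ℝ)) : Set (Fin N → ℝ)),
        wnorm pSt (fun _ => 1) (lam : Fin N → ℝ) := by
  classical
  haveI : Fact ((1:ℝ≥0∞) ≤ q) := ⟨hqq.one_le_left⟩
  set rows : Fin m → (Fin N → ℝ) := fun j => fun i => A (stdb N i) j with hrows
  set X : Submodule ℝ (Fin N → ℝ) := Submodule.span ℝ (Set.range rows) with hXdef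
  have hXrank : Module.finrank ℝ X ≤ m := by
    have := finrank_range_le_card (R := ℝ) rows
    rw [Fintype.card_fin] at this
    exact this
  refine ⟨X, hXrank, ?_⟩
  -- annihilating X implies membership in ker A
  have hker : ∀ lam : Fin N → ℝ, (∀ z ∈ X, pr z lam = 0) → A lam = 0 := by
    intro lam hann
    funext j
    have h1 : A lam = ∑ i, lam i • A (stdb N i) := by
      conv_lhs => rw [pi_eq_sum_univ lam, map_sum]
      refine Finset.sum_congr rfl fun i _ => ?_
      rw [map_smul]
      rfl
    have h2 : (A lam) j = pr (rows j) lam := by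
      rw [h1]
      rw [Finset.sum_apply]
      unfold pr
      refine Finset.sum_congr rfl fun i _ => ?_
      rw [Pi.smul_apply, smul_eq_mul, mul_comm]
    rw [Pi.zero_apply, h2]
    exact hann (rows j) (Submodule.subset_span ⟨j, rfl⟩)
  -- PiLp space setup
  set F := PiLp q (fun _ : Fin N => ℝ) with hF
  set Φ : (Fin N → ℝ) →ₗ[ℝ] F :=
    (WithLp.linearEquiv q ℝ (Fin N → ℝ)).symm.toLinearMap ∘ₗ scaleL w with hΦ
  have hΦnorm : ∀ y, ‖Φ y‖ = wnorm q w y := by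
    intro y
    rw [wnorm_eq_pilp q w hw y]
    rfl
  set Y : Submodule ℝ F := X.map Φ with hY
  haveI : FiniteDimensional ℝ F :=
    Module.Finite.equiv (WithLp.linearEquiv q ℝ (Fin N → ℝ)).symm
  haveI : IsClosed (Y : Set F) := Y.closed_of_finiteDimensional
  haveI : Nonempty X := ⟨0⟩
  -- bound for the Gelfand-side supremum
  have hCgel : ∀ lam : Fin N → ℝ, lam ∈ wball qSt (fun i => (w i)⁻¹) →
      wnorm pSt (fun _ => 1) lam ≤ ∑ i, (w i)⁻¹ := by
    intro lam hlam
    have h2 : wnorm pSt (fun _ => 1) lam ≤ ∑ i, |lam i| := by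
      have := wnorm_le_sum pSt hpq.one_le_right (fun _ => 1) (fun _ => one_pos) lam
      simpa using this
    refine h2.trans (Finset.sum_le_sum fun i _ => ?_)
    have h3 := coord_le qSt hqq.one_le_right (fun i => (w i)⁻¹) (fun i => inv_pos.2 (hw i)) lam i
    have h4 : |lam i| / (w i)⁻¹ ≤ 1 := h3.trans hlam
    rwa [div_le_one (inv_pos.2 (hw i))] at h4
  have hbddGel : BddAbove (Set.range fun lam : (wball qSt (fun i => (w i)⁻¹) ∩
      (LinearMap.ker A : Set (Fin N → ℝ)) : Set (Fin N → ℝ)) =>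
      wnorm pSt (fun _ => 1) (lam : Fin N → ℝ)) := by
    refine ⟨∑ i, (w i)⁻¹, ?_⟩
    rintro _ ⟨⟨lam, hlam, _⟩, rfl⟩
    exact hCgel lam hlam
  have hgel_nonneg : (0:ℝ) ≤ ⨆ lam : (wball qSt (fun i => (w i)⁻¹) ∩
      (LinearMap.ker A : Set (Fin N → ℝ)) : Set (Fin N → ℝ)),
      wnorm pSt (fun _ => 1) (lam : Fin N → ℝ) :=
    Real.iSup_nonneg fun lam => wnorm_nonneg pSt _ (fun _ => one_pos) _
  refine Real.iSup_le ?_ hgel_nonneg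
  rintro ⟨x, hx⟩
  -- Hahn-Banach: functional on the quotient
  obtain ⟨g, hgnorm, hgval⟩ :=
    exists_dual_vector'' ℝ (Submodule.Quotient.mk (p := Y) (Φ x))
  set Fl : (Fin N → ℝ) →ₗ[ℝ] ℝ :=
    (g : (F ⧸ Y) →ₗ[ℝ] ℝ) ∘ₗ (Y.mkQ ∘ₗ Φ) with hFl
  set lam : Fin N → ℝ := fun i => Fl (stdb N i) with hlam
  have hFlval : ∀ y, Fl y = pr y lam := fun y => rep_linear Fl y
  have hFl_le : ∀ y, Fl y ≤ wnorm q w y := by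
    intro y
    have h1 : Fl y = g (Submodule.Quotient.mk (p := Y) (Φ y)) := rfl
    rw [h1]
    calc g (Submodule.Quotient.mk (p := Y) (Φ y))
        ≤ ‖g (Submodule.Quotient.mk (p := Y) (Φ y))‖ := le_abs_self _
      _ ≤ ‖g‖ * ‖(Submodule.Quotient.mk (p := Y) (Φ y) : F ⧸ Y)‖ := g.le_opNorm _
      _ ≤ 1 * ‖Φ y‖ := by
          refine mul_le_mul hgnorm (Submodule.Quotient.norm_mk_le _ _) (norm_nonneg _)
            zero_le_one
      _ = wnorm q w y := by rw [one_mul, hΦnorm]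
  -- lam lies in the weighted dual ball and in ker A
  have hlam_ball : lam ∈ wball qSt (fun i => (w i)⁻¹) := by
    obtain ⟨xs, hxs1, hxs2⟩ := pair_sharp_w hqq w hw lam
    show wnorm qSt (fun i => (w i)⁻¹) lam ≤ 1
    rw [← hxs2, ← hFlval xs]
    exact (hFl_le xs).trans hxs1
  have hlam_ker : A lam = 0 := by
    refine hker lam fun z hz => ?_
    have h1 : pr z lam = Fl z := (hFlval z).symm ▸ rfl
    have h2 : Fl z = g (Submodule.Quotient.mk (p := Y) (Φ z)) := rfl
    have h3 : (Submodule.Quotient.mk (p := Y) (Φ z)) = 0 :=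
      (Submodule.Quotient.mk_eq_zero _).2 ⟨z, hz, rfl⟩
    rw [← hFlval z, h2, h3, map_zero]
  -- the distance is bounded by the functional value
  have hdist : (⨅ z : X, wnorm q w (x - (z : Fin N → ℝ)))
      ≤ ‖(Submodule.Quotient.mk (p := Y) (Φ x) : F ⧸ Y)‖ := by
    refine le_of_forall_pos_le_add fun ε hε => ?_
    obtain ⟨v, hveq, hvlt⟩ := Submodule.Quotient.norm_mk_lt
      (Submodule.Quotient.mk (p := Y) (Φ x) : F ⧸ Y) hε
    have hdiff : Φ x - v ∈ Y := by
      rw [← Submodule.Quotient.eq]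
      exact hveq.symm
    obtain ⟨z', hz', hz'eq⟩ := hdiff
    have h5 : wnorm q w (x - z') = ‖v‖ := by
      rw [← hΦnorm (x - z'), map_sub, hz'eq]
      congr 1
      abel
    calc (⨅ z : X, wnorm q w (x - (z : Fin N → ℝ)))
        ≤ wnorm q w (x - z') := ciInf_le
          ⟨0, by rintro _ ⟨z, rfl⟩; exact wnorm_nonneg q w hw _⟩ (⟨z', hz'⟩ : X)
      _ = ‖v‖ := h5
      _ ≤ ‖(Submodule.Quotient.mk (p := Y) (Φ x) : F ⧸ Y)‖ + ε := hvlt.le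
  have hval : ‖(Submodule.Quotient.mk (p := Y) (Φ x) : F ⧸ Y)‖ = pr x lam := by
    have hgval' : g (Submodule.Quotient.mk (p := Y) (Φ x))
        = ‖(Submodule.Quotient.mk (p := Y) (Φ x) : F ⧸ Y)‖ := by exact_mod_cast hgval
    rw [← hgval', ← hFlval x]
    simp [hFl, LinearMap.comp_apply, Submodule.mkQ_apply]
  have hfinal : pr x lam ≤ wnorm pSt (fun _ => 1) lam := by
    calc pr x lam ≤ wnorm p (fun _ => 1) x * wnorm pSt (fun _ => 1) lam := pair_le hpq x lam
      _ ≤ 1 * wnorm pSt (fun _ => 1) lam :=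
          mul_le_mul_of_nonneg_right hx (wnorm_nonneg pSt _ (fun _ => one_pos) _)
      _ = wnorm pSt (fun _ => 1) lam := one_mul _
  refine (hdist.trans (hval ▸ hfinal)).trans ?_
  exact le_ciSup hbddGel (⟨lam, hlam_ball, hlam_ker⟩ : (wball qSt (fun i => (w i)⁻¹) ∩
    (LinearMap.ker A : Set (Fin N → ℝ)) : Set (Fin N → ℝ)))

/-- Theorem B.2, Equality: for `1 ≤ p, q ≤ ∞` with Hölder conjugates
`p*`, `q*` and positive weights `w`,
`d_m(B^p_N, ℓ^q_N(w)) = d^m(B^{q*}_N(1/w), ℓ^{p*}_N)`. -/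
theorem statement0 {N m : ℕ} (hm : m ≤ N) (p q pSt qSt : ℝ≥0∞)
    (hp : 1 ≤ p) (hq : 1 ≤ q)
    (hpSt : 1 / p + 1 / pSt = 1) (hqSt : 1 / q + 1 / qSt = 1)
    (w : Fin N → ℝ) (hw : ∀ i, 0 < w i) :
    kolWidth m (wball p (fun _ => 1)) (wnorm q w) =
      gelWidth m (wball qSt (fun i => (w i)⁻¹)) (wnorm pSt (fun _ => 1)) := by
  have hpq : ConjTriple p pSt := conjTriple_of hp hpSt
  have hqq : ConjTriple q qSt := conjTriple_of hq hqSt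
  unfold kolWidth gelWidth
  apply le_antisymm
  · refine le_csInf ⟨_, 0, rfl⟩ ?_
    rintro t ⟨A, rfl⟩
    obtain ⟨X, hX, hle⟩ := dirB hpq hqq w hw A
    refine csInf_le_of_le ?_ ?_ hle
    · exact ⟨0, by
        rintro r ⟨X', hX', rfl⟩
        exact Real.iSup_nonneg fun x => Real.iInf_nonneg fun z => wnorm_nonneg q w hw _⟩
    · exact ⟨X, hX, rfl⟩
  · have hbot : Module.finrank ℝ (⊥ : Submodule ℝ (Fin N → ℝ)) ≤ m := by simp
    refine le_csInf ⟨_, ⊥, hbot, rfl⟩ ?_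
    rintro t ⟨X, hX, rfl⟩
    obtain ⟨A, hle⟩ := dirA hpq hqq w hw X hX
    refine csInf_le_of_le ?_ ?_ hle
    · exact ⟨0, by
        rintro r ⟨A', rfl⟩
        exact Real.iSup_nonneg fun lam => wnorm_nonneg pSt _ (fun _ => one_pos) _⟩
    · exact ⟨A, rfl⟩

end
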